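/- arXiv:1506.09175 — 3 statements merged into one kernel-verified Lean document; each statement's English description precedes it below -/
import Mathlib

section
/- Let f, g ∈ C^∞(ℝⁿ) and S ⊂ ℝ open. If λ ∈ ℝ is a regular value of f (i.e. ∇f(x) ≠ 0 for all x ∈ f⁻¹(λ)) and f satisfies the (g,S)-Malgrange condition at λ, then there exists a neighborhood U of λ such that ∇f(x) ≠ 0 for all x ∈ f⁻¹(U). -/
/-- Property 3.2: if `λ` is a regular value of `f` and `f` satisfies the `(g,S)`-Malgrange
condition at `λ`, then there is a neighborhood `U` of `λ` with `∇f(x) ≠ 0` for all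
`x ∈ f⁻¹(U)`. -/
theorem stmt_4 {n : ℕ} (f g : EuclideanSpace ℝ (Fin n) → ℝ)
    (hf : ContDiff ℝ (⊤ : ℕ∞) f) (hg : ContDiff ℝ (⊤ : ℕ∞) g)
    (S : Set ℝ) (hS : IsOpen S)
    (gradgf : EuclideanSpace ℝ (Fin n) → EuclideanSpace ℝ (Fin n))
    (hgradgf : ∀ x, gradgf x =
      gradient f x - ((inner ℝ (gradient f x) (gradient g x) : ℝ) / ‖gradient g x‖ ^ 2) •
        gradient g x)
    (lam : ℝ)
    -- `λ` is a regular value of `f`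
    (hreg : ∀ x, f x = lam → gradient f x ≠ 0)
    -- `f` satisfies the `(g,S)`-Malgrange condition at `λ`
    (hMal : ∃ U : Set ℝ, IsOpen U ∧ lam ∈ U ∧ ∃ R > (0 : ℝ),
      (∀ x, f x ∈ U → R < ‖x‖ → gradient g x ≠ 0) ∧
      (∀ x, f x ∈ U → R < ‖x‖ → g x ∈ S) ∧
      (∀ s ∈ S, ∃ δ > (0 : ℝ), ∀ x, f x ∈ U → R < ‖x‖ → g x = s →
        δ ≤ ‖gradgf x‖ * ‖x‖)) :
    ∃ U : Set ℝ, IsOpen U ∧ lam ∈ U ∧ ∀ x, f x ∈ U → gradient f x ≠ 0 := by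
  obtain ⟨U, hU, hlamU, R, hR, hgradg, hgS, hδ⟩ := hMal
  have hcontf : Continuous f := hf.continuous
  have hcont : Continuous (gradient f) := by
    have h1 : Continuous (fderiv ℝ f) :=
      hf.continuous_fderiv (by simp)
    exact ((InnerProductSpace.toDual ℝ _).symm.continuous.comp h1)
  set C : Set (EuclideanSpace ℝ (Fin n)) :=
    Metric.closedBall 0 R ∩ (gradient f) ⁻¹' {0} with hC
  have hCcompact : IsCompact C :=
    (isCompact_closedBall 0 R).inter_right (isClosed_singleton.preimage hcont)
  have hfC : IsCompact (f '' C) := hCcompact.image hcontf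
  have hlam_not : lam ∉ f '' C := by
    rintro ⟨x, ⟨-, hx0⟩, hfx⟩
    exact hreg x hfx hx0
  refine ⟨U ∩ (f '' C)ᶜ, hU.inter hfC.isClosed.isOpen_compl, ⟨hlamU, hlam_not⟩, ?_⟩
  rintro x ⟨hxU, hxC⟩ hx0
  rcases le_or_gt ‖x‖ R with hle | hlt
  · exact hxC ⟨x, ⟨by simpa [Metric.mem_closedBall, dist_zero_right] using hle,
      by simpa using hx0⟩, rfl⟩
  · have hgxS : g x ∈ S := hgS x hxU hlt
    obtain ⟨δ, hδpos, hδle⟩ := hδ (g x) hgxS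
    have h0 : gradgf x = 0 := by
      rw [hgradgf x, hx0]
      simp
    have := hδle x hxU hlt rfl
    rw [h0] at this
    simp at this
    linarith
end

section
/- Let F = (f₁, f₂) : ℝ² → ℝ² be a C^∞ map whose Jacobian determinant Jac(F) := ∂f₁/∂x · ∂f₂/∂y − ∂f₁/∂y · ∂f₂/∂x equals 1 at every point, and suppose f₂ is a polynomial in two variables of degree at most 2. Then F is injective. -/
noncomputable section
open InnerProductSpace MvPolynomial Finsupp

abbrev E2 := EuclideanSpace ℝ (Fin 2)

def vec (x y : ℝ) : E2 := WithLp.toLp 2 ![x, y]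

@[simp] lemma vec_zero (x y : ℝ) : vec x y 0 = x := rfl
@[simp] lemma vec_one (x y : ℝ) : vec x y 1 = y := rfl

lemma vec_eta (p : E2) : vec (p 0) (p 1) = p := by
  ext i; fin_cases i <;> rfl
lemma hasGradientAt_quad (a b c d e k : ℝ) (p : E2) :
    HasGradientAt (fun q : E2 => a*(q 0)^2 + b*(q 0)*(q 1) + c*(q 1)^2 + d*(q 0) + e*(q 1) + k)
      (vec (2*a*(p 0)+b*(p 1)+d) (b*(p 0)+2*c*(p 1)+e)) p := by
  rw [hasGradientAt_iff_hasFDerivAt]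
  have h0 : HasFDerivAt (fun q : E2 => q 0) (EuclideanSpace.proj (0 : Fin 2) : E2 →L[ℝ] ℝ) p :=
    by simpa using (EuclideanSpace.proj (0 : Fin 2) : E2 →L[ℝ] ℝ).hasFDerivAt
  have h1 : HasFDerivAt (fun q : E2 => q 1) (EuclideanSpace.proj (1 : Fin 2) : E2 →L[ℝ] ℝ) p :=
    by simpa using (EuclideanSpace.proj (1 : Fin 2) : E2 →L[ℝ] ℝ).hasFDerivAt
  have H := ((((((h0.mul h0).const_mul a).add ((h0.mul h1).const_mul b)).add
      ((h1.mul h1).const_mul c)).add (h0.const_mul d)).add (h1.const_mul e)).add_const k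
  refine (H.congr_fderiv ?_).congr_of_eventuallyEq (Filter.Eventually.of_forall fun q => ?_)
  · apply ContinuousLinearMap.ext
    intro v
    simp [InnerProductSpace.toDual_apply_apply, PiLp.inner_apply, Fin.sum_univ_two,
      PiLp.proj_apply]
    ring
  · simp; ring
lemma hasDerivAt_vec {g0 g1 : ℝ → ℝ} {g0' g1' t : ℝ}
    (h0 : HasDerivAt g0 g0' t) (h1 : HasDerivAt g1 g1' t) :
    HasDerivAt (fun s => vec (g0 s) (g1 s)) (vec g0' g1') t := by
  have hpi : HasDerivAt (fun s => ![g0 s, g1 s] : ℝ → (Fin 2 → ℝ)) ![g0', g1'] t := by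
    rw [hasDerivAt_pi]
    intro i
    fin_cases i <;> simpa using ‹_›
  have L := (PiLp.continuousLinearEquiv 2 ℝ (fun _ : Fin 2 => ℝ)).symm
  exact ((PiLp.continuousLinearEquiv 2 ℝ (fun _ : Fin 2 => ℝ)).symm.hasFDerivAt.comp_hasDerivAt
    t hpi)

lemma hasDerivAt_comp_curve (f : E2 → ℝ) (hf : ContDiff ℝ (⊤:ℕ∞) f) {γ : ℝ → E2} {γ' : E2}
    {t : ℝ} (hγ : HasDerivAt γ γ' t) :
    HasDerivAt (fun s => f (γ s)) (gradient f (γ t) 0 * γ' 0 + gradient f (γ t) 1 * γ' 1) t := by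
  have hd : DifferentiableAt ℝ f (γ t) := (hf.differentiable (by simp)).differentiableAt
  have hg := hd.hasGradientAt.hasFDerivAt
  have H := hg.comp_hasDerivAt t hγ
  exact H.congr_deriv (by
    rw [InnerProductSpace.toDual_apply_apply, PiLp.inner_apply, Fin.sum_univ_two]
    simp only [RCLike.inner_apply, conj_trivial]; ring)

lemma const_rate {φ : ℝ → ℝ} (h : ∀ t, HasDerivAt φ 1 t) (t : ℝ) : φ t = φ 0 + t := by
  have h2 : ∀ s, HasDerivAt (fun u => φ u - u) 0 s := by
    intro s; exact ((h s).sub (hasDerivAt_id' s)).congr_deriv (by ring)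
  have hc : (fun u => φ u - u) t = (fun u => φ u - u) 0 :=
    is_const_of_deriv_eq_zero (fun s => (h2 s).differentiableAt)
      (fun s => (h2 s).deriv) t 0
  simp at hc; linarith
lemma msum_eq (m : Fin 2 →₀ ℕ) : (m.sum fun _ e => e) = m 0 + m 1 := by
  rw [Finsupp.sum_fintype _ _ (fun _ => rfl)]
  exact Fin.sum_univ_two _

lemma mem6 (m : Fin 2 →₀ ℕ) (h : m 0 + m 1 ≤ 2) :
    m = 0 ∨ m = Finsupp.single 0 1 ∨ m = Finsupp.single 1 1 ∨ m = Finsupp.single 0 2 ∨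
      m = Finsupp.single 0 1 + Finsupp.single 1 1 ∨ m = Finsupp.single 1 2 := by
  have hm : ∀ (k : Fin 2 →₀ ℕ), m 0 = k 0 → m 1 = k 1 → m = k := by
    intro k h0 h1
    ext i; fin_cases i <;> assumption
  have h9 : (m 0 = 0 ∧ m 1 = 0) ∨ (m 0 = 1 ∧ m 1 = 0) ∨ (m 0 = 0 ∧ m 1 = 1) ∨
      (m 0 = 2 ∧ m 1 = 0) ∨ (m 0 = 1 ∧ m 1 = 1) ∨ (m 0 = 0 ∧ m 1 = 2) := by omega
  rcases h9 with ⟨h0, h1⟩ | ⟨h0, h1⟩ | ⟨h0, h1⟩ | ⟨h0, h1⟩ | ⟨h0, h1⟩ | ⟨h0, h1⟩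
  · exact Or.inl (hm 0 (by simpa using h0) (by simpa using h1))
  · exact Or.inr (Or.inl (hm _ (by simpa using h0) (by simpa using h1)))
  · exact Or.inr (Or.inr (Or.inl (hm _ (by simpa using h0) (by simpa using h1))))
  · exact Or.inr (Or.inr (Or.inr (Or.inl (hm _ (by simpa using h0) (by simpa using h1)))))
  · exact Or.inr (Or.inr (Or.inr (Or.inr (Or.inl (hm _ (by simpa using h0) (by simpa using h1))))))
  · exact Or.inr (Or.inr (Or.inr (Or.inr (Or.inr (hm _ (by simpa using h0) (by simpa using h1))))))

lemma quad_form (P : MvPolynomial (Fin 2) ℝ) (hdeg : P.totalDegree ≤ 2) (g : Fin 2 → ℝ) :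
    MvPolynomial.eval g P =
      P.coeff (Finsupp.single 0 2) * (g 0)^2
      + P.coeff (Finsupp.single 0 1 + Finsupp.single 1 1) * (g 0) * (g 1)
      + P.coeff (Finsupp.single 1 2) * (g 1)^2
      + P.coeff (Finsupp.single 0 1) * (g 0)
      + P.coeff (Finsupp.single 1 1) * (g 1)
      + P.coeff 0 := by
  classical
  set S : Finset (Fin 2 →₀ ℕ) :=
    {0, Finsupp.single 0 1, Finsupp.single 1 1, Finsupp.single 0 2,
      Finsupp.single 0 1 + Finsupp.single 1 1, Finsupp.single 1 2} with hS
  have hsub : P.support ⊆ S := by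
    intro m hmem
    have hd : m 0 + m 1 ≤ 2 := by
      have := MvPolynomial.le_totalDegree hmem
      rw [msum_eq] at this
      omega
    have := mem6 m hd
    simp only [hS, Finset.mem_insert, Finset.mem_singleton]
    tauto
  rw [MvPolynomial.eval_eq']
  rw [Finset.sum_subset hsub (fun x _ hx => by
    simp [MvPolynomial.notMem_support_iff.mp hx])]
  have hprod : ∀ m : Fin 2 →₀ ℕ, (∏ i, g i ^ m i) = g 0 ^ m 0 * g 1 ^ m 1 :=
    fun m => Fin.prod_univ_two _
  rw [hS]
  rw [Finset.sum_insert (by simp [Finsupp.ext_iff, Fin.forall_fin_two, Finsupp.single_apply]), Finset.sum_insert (by simp [Finsupp.ext_iff, Fin.forall_fin_two, Finsupp.single_apply]), Finset.sum_insert (by simp [Finsupp.ext_iff, Fin.forall_fin_two, Finsupp.single_apply]),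
    Finset.sum_insert (by simp [Finsupp.ext_iff, Fin.forall_fin_two, Finsupp.single_apply]), Finset.sum_insert (by simp [Finsupp.ext_iff, Fin.forall_fin_two, Finsupp.single_apply]), Finset.sum_singleton]
  simp [hprod, Finsupp.single_apply]
  ring

lemma hasDerivAt_quadpoly (c0 c1 c2 t : ℝ) :
    HasDerivAt (fun s : ℝ => c0 + s*c1 + s^2/2*c2) (c1 + t*c2) t := by
  have h1 : HasDerivAt (fun s : ℝ => s*c1) c1 t := by
    simpa using (hasDerivAt_id t).mul_const c1
  have h2 : HasDerivAt (fun s : ℝ => s^2/2*c2) (t*c2) t := by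
    have := ((hasDerivAt_pow 2 t).div_const 2).mul_const c2
    exact this.congr_deriv (by norm_num)
  exact (((hasDerivAt_const t c0).add h1).add h2).congr_deriv (by ring)

set_option maxHeartbeats 2000000 in
/-- Remark 3.9: if `F = (f₁, f₂) : ℝ² → ℝ²` is smooth with Jacobian determinant
identically `1` and `f₂` is a polynomial of degree at most `2`, then `F` is injective. -/
theorem stmt_15 (f₁ f₂ : EuclideanSpace ℝ (Fin 2) → ℝ)
    (hf₁ : ContDiff ℝ (⊤ : ℕ∞) f₁) (hf₂ : ContDiff ℝ (⊤ : ℕ∞) f₂)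
    (hjac : ∀ p : EuclideanSpace ℝ (Fin 2),
      gradient f₁ p 0 * gradient f₂ p 1 - gradient f₁ p 1 * gradient f₂ p 0 = 1)
    (P : MvPolynomial (Fin 2) ℝ) (hdeg : P.totalDegree ≤ 2)
    (hP : ∀ p : EuclideanSpace ℝ (Fin 2), f₂ p = MvPolynomial.eval (fun i => p i) P) :
    Function.Injective (fun p : EuclideanSpace ℝ (Fin 2) => (f₁ p, f₂ p)) := by
  set a := P.coeff (Finsupp.single 0 2) with ha_def
  set b := P.coeff (Finsupp.single 0 1 + Finsupp.single 1 1) with hb_def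
  set c := P.coeff (Finsupp.single 1 2) with hc_def
  set d := P.coeff (Finsupp.single 0 1) with hd_def
  set e := P.coeff (Finsupp.single 1 1) with he_def
  set k := P.coeff 0 with hk_def
  have hf2eq : f₂ = fun p : E2 =>
      a*(p 0)^2 + b*(p 0)*(p 1) + c*(p 1)^2 + d*(p 0) + e*(p 1) + k := by
    funext p
    rw [hP p, quad_form P hdeg]
  -- gradient of f₂
  have hgrad2 : ∀ p : E2, gradient f₂ p =
      vec (2*a*(p 0)+b*(p 1)+d) (b*(p 0)+2*c*(p 1)+e) := by
    intro p
    rw [hf2eq]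
    exact (hasGradientAt_quad a b c d e k p).gradient
  -- non-vanishing of the gradient of f₂
  have Hnv : ∀ x y : ℝ, 2*a*x+b*y+d = 0 → b*x+2*c*y+e = 0 → False := by
    intro x y h0 h1
    have hj := hjac (vec x y)
    rw [hgrad2 (vec x y)] at hj
    simp only [vec_zero, vec_one] at hj
    rw [h0, h1] at hj
    simp at hj
  -- degenerate Hessian
  have hb4 : b^2 = 4*a*c := by
    by_contra hD
    have hDne : 4*a*c - b^2 ≠ 0 := fun h => hD (by linarith)
    exact Hnv ((b*e - 2*c*d)/(4*a*c-b^2)) ((b*d - 2*a*e)/(4*a*c-b^2))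
      (by rw [mul_div_assoc', mul_div_assoc', ← add_div, div_add' _ _ _ hDne, div_eq_zero_iff]; left; ring)
      (by rw [mul_div_assoc', mul_div_assoc', ← add_div, div_add' _ _ _ hDne, div_eq_zero_iff]; left; ring)
  -- main argument
  intro p q hFpq
  simp only [Prod.mk.injEq] at hFpq
  obtain ⟨hf1pq, hf2pq⟩ := hFpq
  set x := p 0 with hx
  set y := p 1 with hy
  set x' := q 0 with hx'
  set y' := q 1 with hy'
  -- the Hamiltonian-flow curve through p
  set g0 : ℝ → ℝ := fun t => x + t*(b*x+2*c*y+e) + t^2/2*(b*e-2*c*d) with hg0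
  set g1 : ℝ → ℝ := fun t => y + t*(-(2*a*x+b*y+d)) + t^2/2*(b*d-2*a*e) with hg1
  set γ : ℝ → E2 := fun t => vec (g0 t) (g1 t) with hγ
  have hγ0 : γ 0 = p := by
    simp only [hγ, hg0, hg1]
    norm_num
    exact vec_eta p
  have hder : ∀ t, HasDerivAt (fun s => f₁ (γ s)) 1 t := by
    intro t
    have hd0 : HasDerivAt g0 ((b*x+2*c*y+e) + t*(b*e-2*c*d)) t := hasDerivAt_quadpoly _ _ _ t
    have hd1 : HasDerivAt g1 ((-(2*a*x+b*y+d)) + t*(b*d-2*a*e)) t := hasDerivAt_quadpoly _ _ _ t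
    have hdγ : HasDerivAt γ (vec ((b*x+2*c*y+e) + t*(b*e-2*c*d))
        ((-(2*a*x+b*y+d)) + t*(b*d-2*a*e))) t := hasDerivAt_vec hd0 hd1
    have H := hasDerivAt_comp_curve f₁ hf₁ hdγ
    have hv0 : (b*x+2*c*y+e) + t*(b*e-2*c*d) = b*(g0 t)+2*c*(g1 t)+e := by
      simp only [hg0, hg1]
      linear_combination (-(t*x) - t^2*e/2) * hb4
    have hv1 : (-(2*a*x+b*y+d)) + t*(b*d-2*a*e) = -(2*a*(g0 t)+b*(g1 t)+d) := by
      simp only [hg0, hg1]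
      linear_combination (-(t*y) + t^2*d/2) * hb4
    have hj := hjac (γ t)
    rw [hgrad2 (γ t)] at hj
    have hγt0 : (γ t) 0 = g0 t := rfl
    have hγt1 : (γ t) 1 = g1 t := rfl
    simp only [vec_zero, vec_one, hγt0, hγt1] at hj
    convert H using 1
    simp only [vec_zero, vec_one]
    rw [hv0, hv1]
    linear_combination -hj
  have hφ : ∀ t, f₁ (γ t) = f₁ p + t := by
    intro t
    have h2 : ∀ s, HasDerivAt (fun u => f₁ (γ u) - u) 0 s := by
      intro s; exact ((hder s).sub (hasDerivAt_id' s)).congr_deriv (by ring)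
    have hc : f₁ (γ t) - t = f₁ (γ 0) - 0 :=
      is_const_of_deriv_eq_zero (fun s => (h2 s).differentiableAt)
        (fun s => (h2 s).deriv) t 0
    rw [hγ0] at hc
    linarith
  -- the level-set constraint
  have hQ : a*x^2 + b*x*y + c*y^2 + d*x + e*y = a*x'^2 + b*x'*y' + c*y'^2 + d*x' + e*y' := by
    have h1 := hf2pq
    rw [hf2eq] at h1
    simp only at h1
    linarith [h1]
  -- find the time t with γ t = q
  have hreach : ∃ t, g0 t = x' ∧ g1 t = y' := by
    by_cases ha : a = 0
    · have hb0 : b = 0 := by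
        have hbb : b^2 = 0 := by rw [hb4, ha]; ring
        exact pow_eq_zero_iff (by norm_num : (2:ℕ) ≠ 0) |>.mp hbb
      by_cases hc : c = 0
      · -- linear case
        have hQ' : d*x + e*y = d*x' + e*y' := by
          linear_combination hQ + (x'^2 - x^2)*ha + (x'*y' - x*y)*hb0 + (y'^2 - y^2)*hc
        by_cases he : e = 0
        · have hd0 : d ≠ 0 := by
            intro hd0
            exact Hnv 0 0 (by rw [ha, hb0, hd0]; ring) (by rw [hb0, hc, he]; ring)
          refine ⟨(y - y')/d, ?_, ?_⟩
          · simp only [hg0]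
            have hxx : x = x' := by
              rw [he] at hQ'
              have := mul_left_cancel₀ hd0 (by linarith : d*x = d*x')
              exact this
            rw [hb0, hc, he, hxx]; ring
          · simp only [hg1, ha, hb0]
            field_simp
            ring
        · refine ⟨(x' - x)/e, ?_, ?_⟩
          · simp only [hg0, ha, hb0, hc]
            field_simp
            ring
          · simp only [hg1, ha, hb0, hc]
            field_simp
            linear_combination (2*e)*hQ'
      · -- parabolic case, a = b = 0, c ≠ 0
        have hd0 : d ≠ 0 := by
          intro hd0
          exact Hnv 0 (-e/(2*c)) (by rw [ha, hb0, hd0]; ring) (by rw [hb0]; field_simp; ring)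
        have hQ' : c*y^2 + d*x + e*y = c*y'^2 + d*x' + e*y' := by
          linear_combination hQ + (x'^2 - x^2)*ha + (x'*y' - x*y)*hb0
        refine ⟨(y - y')/d, ?_, ?_⟩
        · simp only [hg0, ha, hb0]
          field_simp
          linear_combination (2*d)*hQ'
        · simp only [hg1, ha, hb0]
          field_simp
          ring
    · -- a ≠ 0
      have hβ : 2*a*e - b*d ≠ 0 := by
        intro h0
        refine Hnv (-d/(2*a)) 0 (by field_simp; ring) (by field_simp; linear_combination h0)
      set t := (2*a*(x'-x) + b*(y'-y))/(2*a*e - b*d) with ht_def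
      have hc' : c = b^2/(4*a) := by
        field_simp
        linarith [hb4]
      have hs : 2*a*(g0 t) + b*(g1 t) = 2*a*x' + b*y' := by
        simp only [hg0, hg1, ht_def, hc']
        field_simp
        ring
      have hcons : a*(g0 t)^2 + b*(g0 t)*(g1 t) + c*(g1 t)^2 + d*(g0 t) + e*(g1 t)
          = a*x^2 + b*x*y + c*y^2 + d*x + e*y := by
        simp only [hg0, hg1, hc']
        field_simp
        ring
      have hQ2 : a*(g0 t)^2 + b*(g0 t)*(g1 t) + c*(g1 t)^2 + d*(g0 t) + e*(g1 t)
          = a*x'^2 + b*x'*y' + c*y'^2 + d*x' + e*y' := hcons.trans hQ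
      have h1m : (4*a)*(d*(g0 t) + e*(g1 t)) = (4*a)*(d*x' + e*y') := by
        linear_combination 4*a*hQ2 - (2*a*(g0 t)+b*(g1 t)+2*a*x'+b*y')*hs
          + ((g1 t)^2 - y'^2)*hb4
      have h1 : d*(g0 t) + e*(g1 t) = d*x' + e*y' := by
        have h4a : (4*a) ≠ 0 := by intro h; exact ha (by linarith)
        exact mul_left_cancel₀ h4a h1m
      have h2 : (b*d - 2*a*e)*((b*(g0 t) - 2*a*(g1 t)) - (b*x' - 2*a*y')) = 0 := by
        linear_combination (4*a^2+b^2)*h1 - (2*a*d+b*e)*hs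
      have hβ' : b*d - 2*a*e ≠ 0 := fun h => hβ (by linarith)
      have hτ : b*(g0 t) - 2*a*(g1 t) = b*x' - 2*a*y' := by
        rcases mul_eq_zero.mp h2 with h | h
        · exact absurd h hβ'
        · linarith
      have h4 : (4*a^2+b^2) ≠ 0 := by
        have h5 : 0 < a^2 := by positivity
        nlinarith [sq_nonneg b]
      refine ⟨t, ?_, ?_⟩
      · exact mul_left_cancel₀ h4 (by linear_combination 2*a*hs + b*hτ)
      · exact mul_left_cancel₀ h4 (by linear_combination b*hs - 2*a*hτ)
  obtain ⟨t, ht0, ht1⟩ := hreach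
  have hγtq : γ t = q := by
    rw [hγ]; simp only [ht0, ht1]; exact vec_eta q
  have := hφ t
  rw [hγtq] at this
  have ht : t = 0 := by linarith [hf1pq, this]
  rw [ht] at hγtq
  rw [hγ0] at hγtq
  exact hγtq
end
end

section
/- Let f(x,y) := x − x³y² and g(x,y) := y on ℝ². Then the fiber gradient is ∇_g f(x,y) = (1 − 3x²y², 0), and for every ε > 0 and every R > 0 there exists a point (x,y) ∈ ℝ² with 0 < |y| < ε, ‖(x,y)‖ > R, and ∇_g f(x,y) = 0. In particular, for no ε > 0 does f satisfy a Malgrange-type inequality using ∇_g f on the strip g⁻¹((−ε, ε)). -/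
open InnerProductSpace

noncomputable def e2 (a b : ℝ) : EuclideanSpace ℝ (Fin 2) :=
  (WithLp.equiv 2 (Fin 2 → ℝ)).symm ![a, b]

lemma e2_apply (a b : ℝ) (i : Fin 2) : e2 a b i = ![a, b] i := rfl

lemma hasGrad_f (v : EuclideanSpace ℝ (Fin 2)) :
    HasGradientAt (fun v : EuclideanSpace ℝ (Fin 2) => v 0 - v 0 ^ 3 * v 1 ^ 2)
      (e2 (1 - 3 * (v 0) ^ 2 * (v 1) ^ 2) (-(2 * (v 0) ^ 3 * (v 1)))) v := by
  rw [hasGradientAt_iff_hasFDerivAt]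
  have h0 : HasFDerivAt (fun v : EuclideanSpace ℝ (Fin 2) => v 0)
      (EuclideanSpace.proj (0 : Fin 2) : EuclideanSpace ℝ (Fin 2) →L[ℝ] ℝ) v := by
    exact (EuclideanSpace.proj (0 : Fin 2) :
      EuclideanSpace ℝ (Fin 2) →L[ℝ] ℝ).hasFDerivAt
  have h1 : HasFDerivAt (fun v : EuclideanSpace ℝ (Fin 2) => v 1)
      (EuclideanSpace.proj (1 : Fin 2) : EuclideanSpace ℝ (Fin 2) →L[ℝ] ℝ) v := by
    exact (EuclideanSpace.proj (1 : Fin 2) :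
      EuclideanSpace ℝ (Fin 2) →L[ℝ] ℝ).hasFDerivAt
  have hmain := h0.sub (((h0.mul h0).mul h0).mul (h1.mul h1))
  have hfun : (fun v : EuclideanSpace ℝ (Fin 2) => v 0 - v 0 ^ 3 * v 1 ^ 2)
      = (fun v : EuclideanSpace ℝ (Fin 2) => v 0 - v 0 * v 0 * v 0 * (v 1 * v 1)) := by
    funext w; ring
  rw [hfun]
  have hL : (toDual ℝ (EuclideanSpace ℝ (Fin 2)))
        (e2 (1 - 3 * (v 0) ^ 2 * (v 1) ^ 2) (-(2 * (v 0) ^ 3 * (v 1))))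
      = EuclideanSpace.proj (0 : Fin 2) -
        ((v 0 * v 0 * v 0) • ((v 1) • EuclideanSpace.proj (1 : Fin 2)
            + (v 1) • EuclideanSpace.proj (1 : Fin 2))
          + (v 1 * v 1) • ((v 0 * v 0) • EuclideanSpace.proj (0 : Fin 2)
            + (v 0) • ((v 0) • EuclideanSpace.proj (0 : Fin 2)
              + (v 0) • EuclideanSpace.proj (0 : Fin 2)))) := by
    ext u
    simp [toDual_apply_apply, PiLp.inner_apply, Fin.sum_univ_two, e2_apply,
      RCLike.inner_apply]
    ring
  rw [hL]
  exact hmain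

lemma hasGrad_g (v : EuclideanSpace ℝ (Fin 2)) :
    HasGradientAt (fun v : EuclideanSpace ℝ (Fin 2) => v 1) (e2 0 1) v := by
  rw [hasGradientAt_iff_hasFDerivAt]
  have hL : (toDual ℝ (EuclideanSpace ℝ (Fin 2))) (e2 0 1)
      = EuclideanSpace.proj (1 : Fin 2) := by
    ext u
    simp [toDual_apply_apply, PiLp.inner_apply, Fin.sum_univ_two, e2_apply, RCLike.inner_apply]
  rw [hL]
  exact (EuclideanSpace.proj (1 : Fin 2) :
    EuclideanSpace ℝ (Fin 2) →L[ℝ] ℝ).hasFDerivAt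

/-- Example 2.3: for `f(x,y) = x − x³y²` and `g(x,y) = y`, the fiber gradient is
`∇_g f(x,y) = (1 − 3x²y², 0)`; it vanishes at points with arbitrarily small `|y| ≠ 0`
and arbitrarily large norm, so for no `ε > 0` does `f` satisfy a Malgrange-type
inequality using `∇_g f` on the strip `g⁻¹((−ε, ε))`. -/
theorem stmt_18 (f g : EuclideanSpace ℝ (Fin 2) → ℝ)
    (hf : ∀ v, f v = v 0 - (v 0) ^ 3 * (v 1) ^ 2)
    (hg : ∀ v, g v = v 1)
    (gradgf : EuclideanSpace ℝ (Fin 2) → EuclideanSpace ℝ (Fin 2))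
    (hgradgf : ∀ v, gradgf v =
      gradient f v - ((inner ℝ (gradient f v) (gradient g v) : ℝ) / ‖gradient g v‖ ^ 2) •
        gradient g v) :
    (∀ v : EuclideanSpace ℝ (Fin 2),
      gradgf v 0 = 1 - 3 * (v 0) ^ 2 * (v 1) ^ 2 ∧ gradgf v 1 = 0) ∧
    (∀ ε > (0 : ℝ), ∀ R > (0 : ℝ), ∃ v : EuclideanSpace ℝ (Fin 2),
      0 < |v 1| ∧ |v 1| < ε ∧ R < ‖v‖ ∧ gradgf v = 0) ∧
    (∀ ε > (0 : ℝ), ¬ ∃ δ > (0 : ℝ), ∃ R > (0 : ℝ),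
      ∀ v : EuclideanSpace ℝ (Fin 2), |g v| < ε → R ≤ ‖v‖ → δ ≤ ‖gradgf v‖ * ‖v‖) := by
  have hfe : f = fun v : EuclideanSpace ℝ (Fin 2) => v 0 - v 0 ^ 3 * v 1 ^ 2 := funext hf
  have hge : g = fun v : EuclideanSpace ℝ (Fin 2) => v 1 := funext hg
  have hgf : ∀ v, gradient f v = e2 (1 - 3 * (v 0) ^ 2 * (v 1) ^ 2) (-(2 * (v 0) ^ 3 * (v 1))) := by
    intro v; rw [hfe]; exact (hasGrad_f v).gradient
  have hgg : ∀ v, gradient g v = e2 0 1 := by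
    intro v; rw [hge]; exact (hasGrad_g v).gradient
  have hnorm : ‖e2 (0:ℝ) 1‖ ^ 2 = 1 := by
    rw [← real_inner_self_eq_norm_sq]
    simp [PiLp.inner_apply, Fin.sum_univ_two, e2_apply, RCLike.inner_apply]
    left; rw [EuclideanSpace.norm_eq]; simp [Fin.sum_univ_two, e2_apply]
  have key : ∀ v, gradgf v = e2 (1 - 3 * (v 0) ^ 2 * (v 1) ^ 2) 0 := by
    intro v
    rw [hgradgf, hgf, hgg, hnorm]
    have hinner : (inner ℝ (e2 (1 - 3 * (v 0) ^ 2 * (v 1) ^ 2) (-(2 * (v 0) ^ 3 * (v 1))))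
        (e2 0 1) : ℝ) = -(2 * (v 0) ^ 3 * (v 1)) := by
      simp [PiLp.inner_apply, Fin.sum_univ_two, e2_apply, RCLike.inner_apply]
    rw [hinner]
    ext i
    fin_cases i <;>
      simp [PiLp.sub_apply, PiLp.smul_apply, e2_apply] <;> ring
  have part2 : ∀ ε > (0 : ℝ), ∀ R > (0 : ℝ), ∃ v : EuclideanSpace ℝ (Fin 2),
      0 < |v 1| ∧ |v 1| < ε ∧ R < ‖v‖ ∧ gradgf v = 0 := by
    intro ε hε R hR
    set y : ℝ := min (ε / 2) (1 / (2 * Real.sqrt 3 * R)) with hy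
    have h3 : (0:ℝ) < Real.sqrt 3 := Real.sqrt_pos.mpr (by norm_num)
    have hy0 : 0 < y := lt_min (by linarith) (by positivity)
    set x : ℝ := 1 / (Real.sqrt 3 * y) with hx
    have hx0 : 0 < x := by positivity
    refine ⟨e2 x y, ?_, ?_, ?_, ?_⟩
    · rw [e2_apply]; simpa using abs_pos.mpr hy0.ne'
    · rw [e2_apply]
      simp only [Matrix.cons_val_one, Matrix.head_cons, Matrix.cons_val_zero]
      rw [abs_of_pos hy0]
      calc y ≤ ε / 2 := min_le_left _ _
        _ < ε := by linarith
    · have hsy : Real.sqrt 3 * y ≤ 1 / (2 * R) := by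
        have hy2 : y ≤ 1 / (2 * Real.sqrt 3 * R) := min_le_right _ _
        have h2 : Real.sqrt 3 * (1 / (2 * Real.sqrt 3 * R)) = 1 / (2 * R) := by
          field_simp
        nlinarith
      have hxR : 2 * R ≤ x := by
        rw [hx, le_div_iff₀ (by positivity)]
        have hc : (2 * R) * (1 / (2 * R)) = 1 := by
          field_simp
        nlinarith [mul_le_mul_of_nonneg_left hsy (by linarith : (0:ℝ) ≤ 2 * R)]
      have hnx : x ≤ ‖e2 x y‖ := by
        have h1 : x ^ 2 ≤ ∑ i, ‖e2 x y i‖ ^ 2 := by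
          simp [Fin.sum_univ_two, e2_apply, sq_abs]
          nlinarith
        have h2 := Real.sqrt_le_sqrt h1
        rwa [Real.sqrt_sq hx0.le, ← EuclideanSpace.norm_eq] at h2
      linarith
    · rw [key]
      have h1 : 3 * ((e2 x y) 0) ^ 2 * ((e2 x y) 1) ^ 2 = 1 := by
        simp only [e2_apply, Matrix.cons_val_zero, Matrix.cons_val_one, Matrix.head_cons]
        rw [hx]
        have h33 : Real.sqrt 3 ^ 2 = 3 := Real.sq_sqrt (by norm_num)
        field_simp
        nlinarith
      rw [h1]
      ext i
      fin_cases i <;> simp [e2_apply]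
  refine ⟨fun v => by rw [key]; exact ⟨rfl, rfl⟩, part2, ?_⟩
  rintro ε hε ⟨δ, hδ, R, hR, H⟩
  obtain ⟨v, hv1, hv2, hv3, hv4⟩ := part2 ε hε R hR
  have := H v (by rw [hg]; exact hv2) hv3.le
  rw [hv4] at this
  simp at this
  linarith
end
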